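/- Let (G, {s₁,…,s_r}) be a string group generated by involutions such that G_{1,…,r−1} and G_{2,…,r} are string C-groups, s_r ∉ G_{1,…,r−1}, and G_{2,…,r−1} is a maximal subgroup of G_{2,…,r}. Then (G, {s₁,…,s_r}) is a string C-group. -/

import Mathlib

/-- For a tuple `s : Fin r → G` and `J ⊆ {1,…,r}`, the subgroup `G_J = ⟨sⱼ : j ∈ J⟩`. -/
def subJ {G : Type*} [Group G] {r : ℕ} (s : Fin r → G) (J : Set (Fin r)) : Subgroup G :=
  Subgroup.closure (s '' J)

/-- The intersection property `G_J ⊓ G_K = G_{J ∩ K}` holds for all subsets `J, K` of `A`;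
`IsCOn s Set.univ` says that `(⟨s⟩, s)` is a string C-group provided `s` is a string
group generated by involutions. -/
def IsCOn {G : Type*} [Group G] {r : ℕ} (s : Fin r → G) (A : Set (Fin r)) : Prop :=
  ∀ J ⊆ A, ∀ K ⊆ A, subJ s J ⊓ subJ s K = subJ s (J ∩ K)

namespace StringCAux

variable {G : Type*} [Group G] {r : ℕ} {s : Fin r → G}

theorem subJ_mono {J K : Set (Fin r)} (h : J ⊆ K) : subJ s J ≤ subJ s K :=
  Subgroup.closure_mono (Set.image_mono h)

theorem subJ_congr {J K : Set (Fin r)} (h : J = K) : subJ s J = subJ s K := by rw [h]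

theorem subJ_commute {A B : Set (Fin r)}
    (h : ∀ i ∈ A, ∀ j ∈ B, Commute (s i) (s j)) :
    ∀ a ∈ subJ s A, ∀ b ∈ subJ s B, Commute a b := by
  intro a ha b hb
  have hB : subJ s B ≤ Subgroup.centralizer (s '' A) := by
    rw [subJ, Subgroup.closure_le]
    rintro x ⟨j, hj, rfl⟩
    rw [SetLike.mem_coe, Subgroup.mem_centralizer_iff]
    rintro y ⟨i, hi, rfl⟩
    exact h i hi j hj
  have hA : subJ s A ≤ Subgroup.centralizer {b} := by
    rw [subJ, Subgroup.closure_le]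
    rintro x ⟨i, hi, rfl⟩
    rw [SetLike.mem_coe, Subgroup.mem_centralizer_iff]
    rintro y (rfl : y = b)
    exact (hB hb (s i) ⟨i, hi, rfl⟩).symm
  exact (hA ha b rfl).symm

theorem subJ_split {A B : Set (Fin r)}
    (h : ∀ i ∈ A, ∀ j ∈ B, Commute (s i) (s j)) :
    ∀ g ∈ subJ s (A ∪ B), ∃ a ∈ subJ s A, ∃ b ∈ subJ s B, g = a * b := by
  have hc := subJ_commute (s := s) h
  intro g hg
  rw [subJ, Set.image_union] at hg
  induction hg using Subgroup.closure_induction with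
  | mem x hx =>
    rcases hx with hx | hx
    · exact ⟨x, Subgroup.subset_closure hx, 1, one_mem _, (mul_one x).symm⟩
    · exact ⟨1, one_mem _, x, Subgroup.subset_closure hx, (one_mul x).symm⟩
  | one => exact ⟨1, one_mem _, 1, one_mem _, (one_mul 1).symm⟩
  | mul x y hx hy ihx ihy =>
    obtain ⟨a1, ha1, b1, hb1, rfl⟩ := ihx
    obtain ⟨a2, ha2, b2, hb2, rfl⟩ := ihy
    refine ⟨a1 * a2, mul_mem ha1 ha2, b1 * b2, mul_mem hb1 hb2, ?_⟩
    have hcb : Commute b1 a2 := (hc a2 ha2 b1 hb1).symm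
    rw [mul_assoc a1 b1, ← mul_assoc b1 a2, hcb.eq, mul_assoc a2, ← mul_assoc a1]
  | inv x hx ihx =>
    obtain ⟨a, ha, b, hb, rfl⟩ := ihx
    refine ⟨a⁻¹, inv_mem ha, b⁻¹, inv_mem hb, ?_⟩
    rw [mul_inv_rev, ((hc a ha b hb).inv_inv.eq).symm]

theorem split_at (k : Fin r) (I : Set (Fin r)) (hk : k ∉ I) :
    I = {i ∈ I | (i : ℕ) < (k : ℕ)} ∪ {i ∈ I | (k : ℕ) < (i : ℕ)} := by
  ext i
  simp only [Set.mem_union, Set.mem_sep_iff]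
  constructor
  · intro hi
    rcases lt_trichotomy ((i : ℕ)) ((k : ℕ)) with h | h | h
    · exact Or.inl ⟨hi, h⟩
    · exact absurd hi (by rw [show i = k from Fin.ext h]; exact hk)
    · exact Or.inr ⟨hi, h⟩
  · rintro (⟨h, _⟩ | ⟨h, _⟩) <;> exact h

theorem comm_split (hcomm : ∀ i j : Fin r, (i : ℕ) + 2 ≤ (j : ℕ) ∨ (j : ℕ) + 2 ≤ (i : ℕ) →
      Commute (s i) (s j)) (k : Fin r) (I : Set (Fin r)) :
    ∀ i ∈ {i ∈ I | (i : ℕ) < (k : ℕ)}, ∀ j ∈ {i ∈ I | (k : ℕ) < (i : ℕ)},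
      Commute (s i) (s j) := by
  rintro i ⟨_, hi⟩ j ⟨_, hj⟩
  exact hcomm i j (Or.inl (by omega))

section Main

variable (hcomm : ∀ i j : Fin r, (i : ℕ) + 2 ≤ (j : ℕ) ∨ (j : ℕ) + 2 ≤ (i : ℕ) →
      Commute (s i) (s j))
    (h1 : IsCOn s {i | (i : ℕ) + 1 < r})
    (h2 : IsCOn s {i | 0 < (i : ℕ)})
    (hmid : subJ s {i | (i : ℕ) + 1 < r} ⊓ subJ s {i | 0 < (i : ℕ)}
      = subJ s ({i | (i : ℕ) + 1 < r} ∩ {i | 0 < (i : ℕ)}))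

include h2 hmid in
theorem lemA0 {I : Set (Fin r)} (hI : I ⊆ {i | 0 < (i : ℕ)}) :
    subJ s {i | (i : ℕ) + 1 < r} ⊓ subJ s I = subJ s ({i | (i : ℕ) + 1 < r} ∩ I) := by
  have h' : subJ s {i : Fin r | 0 < (i : ℕ)} ⊓ subJ s I = subJ s I :=
    inf_eq_right.2 (subJ_mono hI)
  calc subJ s {i | (i : ℕ) + 1 < r} ⊓ subJ s I
      = (subJ s {i | (i : ℕ) + 1 < r} ⊓ subJ s {i | 0 < (i : ℕ)}) ⊓ subJ s I := by
        rw [inf_assoc, h']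
    _ = subJ s ({i | (i : ℕ) + 1 < r} ∩ {i | 0 < (i : ℕ)}) ⊓ subJ s I := by rw [hmid]
    _ = subJ s (({i | (i : ℕ) + 1 < r} ∩ {i | 0 < (i : ℕ)}) ∩ I) :=
        h2 _ Set.inter_subset_right _ hI
    _ = subJ s ({i | (i : ℕ) + 1 < r} ∩ I) := subJ_congr (by
        ext i
        simp only [Set.mem_inter_iff, Set.mem_setOf_eq]
        exact ⟨fun ⟨⟨u, _⟩, w⟩ => ⟨u, w⟩, fun ⟨u, w⟩ => ⟨⟨u, hI w⟩, w⟩⟩)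

include h1 hmid in
theorem lemB0 {I : Set (Fin r)} (hI : I ⊆ {i | (i : ℕ) + 1 < r}) :
    subJ s {i | 0 < (i : ℕ)} ⊓ subJ s I = subJ s ({i | 0 < (i : ℕ)} ∩ I) := by
  have h' : subJ s {i : Fin r | (i : ℕ) + 1 < r} ⊓ subJ s I = subJ s I :=
    inf_eq_right.2 (subJ_mono hI)
  calc subJ s {i | 0 < (i : ℕ)} ⊓ subJ s I
      = (subJ s {i | 0 < (i : ℕ)} ⊓ subJ s {i | (i : ℕ) + 1 < r}) ⊓ subJ s I := by
        rw [inf_assoc, h']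
    _ = subJ s ({i | (i : ℕ) + 1 < r} ∩ {i | 0 < (i : ℕ)}) ⊓ subJ s I := by
        rw [inf_comm (subJ s {i | 0 < (i : ℕ)}), hmid]
    _ = subJ s (({i | (i : ℕ) + 1 < r} ∩ {i | 0 < (i : ℕ)}) ∩ I) :=
        h1 _ Set.inter_subset_left _ hI
    _ = subJ s ({i | 0 < (i : ℕ)} ∩ I) := subJ_congr (by
        ext i
        simp only [Set.mem_inter_iff, Set.mem_setOf_eq]
        exact ⟨fun ⟨⟨_, u⟩, w⟩ => ⟨u, w⟩, fun ⟨u, w⟩ => ⟨⟨hI w, u⟩, w⟩⟩)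

include hcomm h2 hmid in
theorem lemA (I : Set (Fin r)) :
    subJ s {i | (i : ℕ) + 1 < r} ⊓ subJ s I = subJ s ({i | (i : ℕ) + 1 < r} ∩ I) := by
  by_cases h0 : I ⊆ {i | 0 < (i : ℕ)}
  · exact lemA0 h2 hmid h0
  by_cases hF : I ⊆ {i | (i : ℕ) + 1 < r}
  · rw [inf_eq_right.2 (subJ_mono hF), Set.inter_eq_self_of_subset_right hF]
  by_cases hU : I = Set.univ
  · subst hU
    rw [inf_eq_left.2 (subJ_mono (Set.subset_univ _)), Set.inter_univ]
  obtain ⟨k, hk⟩ := (Set.ne_univ_iff_exists_notMem I).1 hU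
  apply le_antisymm
  · intro g hg
    obtain ⟨hgF, hgI⟩ := Subgroup.mem_inf.1 hg
    have hgI' : g ∈ subJ s ({i ∈ I | (i : ℕ) < (k : ℕ)} ∪ {i ∈ I | (k : ℕ) < (i : ℕ)}) := by
      rw [← split_at k I hk]; exact hgI
    obtain ⟨a, ha, b, hb, rfl⟩ := subJ_split (comm_split hcomm k I) g hgI'
    have hAF : {i ∈ I | (i : ℕ) < (k : ℕ)} ⊆ {i : Fin r | (i : ℕ) + 1 < r} := by
      rintro i ⟨_, hi⟩
      have := k.isLt
      simp only [Set.mem_setOf_eq]; omega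
    have hBV : {i ∈ I | (k : ℕ) < (i : ℕ)} ⊆ {i : Fin r | 0 < (i : ℕ)} := by
      rintro i ⟨_, hi⟩
      simp only [Set.mem_setOf_eq]; omega
    have haF : a ∈ subJ s {i | (i : ℕ) + 1 < r} := subJ_mono hAF ha
    have hbF : b ∈ subJ s {i | (i : ℕ) + 1 < r} := by
      have := mul_mem (inv_mem haF) hgF
      simpa [inv_mul_cancel_left] using this
    have hb' : b ∈ subJ s ({i | (i : ℕ) + 1 < r} ∩ {i ∈ I | (k : ℕ) < (i : ℕ)}) := by
      rw [← lemA0 h2 hmid hBV]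
      exact Subgroup.mem_inf.2 ⟨hbF, hb⟩
    refine mul_mem (subJ_mono ?_ ha) (subJ_mono ?_ hb')
    · rintro i ⟨hiI, hilt⟩
      exact ⟨hAF ⟨hiI, hilt⟩, hiI⟩
    · rintro i ⟨hiF, hiI, _⟩
      exact ⟨hiF, hiI⟩
  · exact le_inf (subJ_mono Set.inter_subset_left) (subJ_mono Set.inter_subset_right)

include hcomm h1 hmid in
theorem lemB (I : Set (Fin r)) :
    subJ s {i | 0 < (i : ℕ)} ⊓ subJ s I = subJ s ({i | 0 < (i : ℕ)} ∩ I) := by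
  by_cases hF : I ⊆ {i | (i : ℕ) + 1 < r}
  · exact lemB0 h1 hmid hF
  by_cases h0 : I ⊆ {i | 0 < (i : ℕ)}
  · rw [inf_eq_right.2 (subJ_mono h0), Set.inter_eq_self_of_subset_right h0]
  by_cases hU : I = Set.univ
  · subst hU
    rw [inf_eq_left.2 (subJ_mono (Set.subset_univ _)), Set.inter_univ]
  obtain ⟨k, hk⟩ := (Set.ne_univ_iff_exists_notMem I).1 hU
  apply le_antisymm
  · intro g hg
    obtain ⟨hgV, hgI⟩ := Subgroup.mem_inf.1 hg
    have hgI' : g ∈ subJ s ({i ∈ I | (i : ℕ) < (k : ℕ)} ∪ {i ∈ I | (k : ℕ) < (i : ℕ)}) := by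
      rw [← split_at k I hk]; exact hgI
    obtain ⟨a, ha, b, hb, rfl⟩ := subJ_split (comm_split hcomm k I) g hgI'
    have hAF : {i ∈ I | (i : ℕ) < (k : ℕ)} ⊆ {i : Fin r | (i : ℕ) + 1 < r} := by
      rintro i ⟨_, hi⟩
      have := k.isLt
      simp only [Set.mem_setOf_eq]; omega
    have hBV : {i ∈ I | (k : ℕ) < (i : ℕ)} ⊆ {i : Fin r | 0 < (i : ℕ)} := by
      rintro i ⟨_, hi⟩
      simp only [Set.mem_setOf_eq]; omega
    have hbV : b ∈ subJ s {i | 0 < (i : ℕ)} := subJ_mono hBV hb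
    have haV : a ∈ subJ s {i | 0 < (i : ℕ)} := by
      have := mul_mem hgV (inv_mem hbV)
      simpa [mul_inv_cancel_right] using this
    have ha' : a ∈ subJ s ({i | 0 < (i : ℕ)} ∩ {i ∈ I | (i : ℕ) < (k : ℕ)}) := by
      rw [← lemB0 h1 hmid hAF]
      exact Subgroup.mem_inf.2 ⟨haV, ha⟩
    refine mul_mem (subJ_mono ?_ ha') (subJ_mono ?_ hb)
    · rintro i ⟨hiV, hiI, _⟩
      exact ⟨hiV, hiI⟩
    · rintro i ⟨hiI, hilt⟩
      exact ⟨hBV ⟨hiI, hilt⟩, hiI⟩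
  · exact le_inf (subJ_mono Set.inter_subset_left) (subJ_mono Set.inter_subset_right)

include hcomm h1 h2 hmid in
theorem lemC (k : Fin r) (I : Set (Fin r)) :
    subJ s I ⊓ subJ s {i | i ≠ k} = subJ s (I \ {k}) := by
  by_cases hkI : k ∈ I
  swap
  · have hsub : I ⊆ {i | i ≠ k} := fun i hi => ne_of_mem_of_not_mem hi hkI
    rw [inf_eq_left.2 (subJ_mono hsub), Set.diff_singleton_eq_self hkI]
  by_cases hklast : (k : ℕ) + 1 = r
  · have hFk : {i : Fin r | i ≠ k} = ({i | (i : ℕ) + 1 < r} : Set (Fin r)) := by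
      ext i
      have hik := i.isLt
      simp only [Set.mem_setOf_eq, ne_eq, Fin.ext_iff]
      omega
    rw [hFk, inf_comm, lemA hcomm h2 hmid I]
    refine subJ_congr ?_
    ext i
    have hik := i.isLt
    simp only [Set.mem_inter_iff, Set.mem_setOf_eq, Set.mem_diff, Set.mem_singleton_iff,
      Fin.ext_iff]
    exact ⟨fun ⟨hu, hv⟩ => ⟨hv, by omega⟩, fun ⟨hv, hu⟩ => ⟨by omega, hv⟩⟩
  by_cases hk0 : (k : ℕ) = 0
  · have hVk : {i : Fin r | i ≠ k} = ({i | 0 < (i : ℕ)} : Set (Fin r)) := by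
      ext i
      simp only [Set.mem_setOf_eq, ne_eq, Fin.ext_iff]
      omega
    rw [hVk, inf_comm, lemB hcomm h1 hmid I]
    refine subJ_congr ?_
    ext i
    simp only [Set.mem_inter_iff, Set.mem_setOf_eq, Set.mem_diff, Set.mem_singleton_iff,
      Fin.ext_iff]
    exact ⟨fun ⟨hu, hv⟩ => ⟨hv, by omega⟩, fun ⟨hv, hu⟩ => ⟨by omega, hv⟩⟩
  -- middle k
  have hW : {i : Fin r | i ≠ k} =
      {i ∈ (Set.univ : Set (Fin r)) | (i : ℕ) < (k : ℕ)} ∪ {i ∈ (Set.univ : Set (Fin r)) | (k : ℕ) < (i : ℕ)} := by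
    ext i
    simp only [Set.mem_setOf_eq, ne_eq, Set.mem_union, Set.mem_sep_iff, Set.mem_univ,
      true_and, Fin.ext_iff]
    omega
  -- sub1 : J inside the "first facet"
  have sub1 : ∀ J : Set (Fin r), J ⊆ {i | (i : ℕ) + 1 < r} →
      subJ s J ⊓ subJ s {i | i ≠ k} = subJ s (J \ {k}) := by
    intro J hJF
    apply le_antisymm
    · intro g hg
      obtain ⟨hgJ, hgW⟩ := Subgroup.mem_inf.1 hg
      have hgW' : g ∈ subJ s
          ({i ∈ (Set.univ : Set (Fin r)) | (i : ℕ) < (k : ℕ)} ∪ {i ∈ (Set.univ : Set (Fin r)) | (k : ℕ) < (i : ℕ)}) := by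
        rw [← hW]; exact hgW
      obtain ⟨a, ha, b, hb, rfl⟩ := subJ_split (comm_split hcomm k Set.univ) g hgW'
      have hAF : {i ∈ (Set.univ : Set (Fin r)) | (i : ℕ) < (k : ℕ)} ⊆ {i : Fin r | (i : ℕ) + 1 < r} := by
        rintro i ⟨_, hi⟩
        have := k.isLt
        simp only [Set.mem_setOf_eq]; omega
      have hBV : {i ∈ (Set.univ : Set (Fin r)) | (k : ℕ) < (i : ℕ)} ⊆ {i : Fin r | 0 < (i : ℕ)} := by
        rintro i ⟨_, hi⟩
        simp only [Set.mem_setOf_eq]; omega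
      have haF : a ∈ subJ s {i | (i : ℕ) + 1 < r} := subJ_mono hAF ha
      have hgF : a * b ∈ subJ s {i | (i : ℕ) + 1 < r} := subJ_mono hJF hgJ
      have hbF : b ∈ subJ s {i | (i : ℕ) + 1 < r} := by
        have := mul_mem (inv_mem haF) hgF
        simpa [inv_mul_cancel_left] using this
      have hb' : b ∈ subJ s ({i | (i : ℕ) + 1 < r} ∩ {i ∈ (Set.univ : Set (Fin r)) | (k : ℕ) < (i : ℕ)}) := by
        rw [← lemA0 h2 hmid hBV]
        exact Subgroup.mem_inf.2 ⟨hbF, hb⟩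
      -- now g ∈ Γ_J ⊓ Γ_{A ∪ (F∩B)}, apply h1
      have hmem : a * b ∈ subJ s J ⊓ subJ s ({i ∈ (Set.univ : Set (Fin r)) | (i : ℕ) < (k : ℕ)} ∪
          ({i | (i : ℕ) + 1 < r} ∩ {i ∈ (Set.univ : Set (Fin r)) | (k : ℕ) < (i : ℕ)})) :=
        Subgroup.mem_inf.2 ⟨hgJ, mul_mem
          (subJ_mono Set.subset_union_left ha) (subJ_mono Set.subset_union_right hb')⟩
      rw [h1 J hJF _ (Set.union_subset hAF Set.inter_subset_left)] at hmem
      refine subJ_mono ?_ hmem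
      rintro i ⟨hiJ, hi⟩
      refine ⟨hiJ, ?_⟩
      simp only [Set.mem_singleton_iff, Fin.ext_iff]
      rcases hi with ⟨_, hlt⟩ | ⟨_, _, hgt⟩ <;> omega
    · exact le_inf (subJ_mono Set.diff_subset)
        (subJ_mono (fun i hi => by
          simp only [Set.mem_setOf_eq, ne_eq]
          intro he; exact hi.2 (by rw [he]; rfl)))
  -- sub2 : J inside the "second facet"
  have sub2 : ∀ J : Set (Fin r), J ⊆ {i | 0 < (i : ℕ)} →
      subJ s J ⊓ subJ s {i | i ≠ k} = subJ s (J \ {k}) := by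
    intro J hJV
    apply le_antisymm
    · intro g hg
      obtain ⟨hgJ, hgW⟩ := Subgroup.mem_inf.1 hg
      have hgW' : g ∈ subJ s
          ({i ∈ (Set.univ : Set (Fin r)) | (i : ℕ) < (k : ℕ)} ∪ {i ∈ (Set.univ : Set (Fin r)) | (k : ℕ) < (i : ℕ)}) := by
        rw [← hW]; exact hgW
      obtain ⟨a, ha, b, hb, rfl⟩ := subJ_split (comm_split hcomm k Set.univ) g hgW'
      have hAF : {i ∈ (Set.univ : Set (Fin r)) | (i : ℕ) < (k : ℕ)} ⊆ {i : Fin r | (i : ℕ) + 1 < r} := by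
        rintro i ⟨_, hi⟩
        have := k.isLt
        simp only [Set.mem_setOf_eq]; omega
      have hBV : {i ∈ (Set.univ : Set (Fin r)) | (k : ℕ) < (i : ℕ)} ⊆ {i : Fin r | 0 < (i : ℕ)} := by
        rintro i ⟨_, hi⟩
        simp only [Set.mem_setOf_eq]; omega
      have hbV : b ∈ subJ s {i | 0 < (i : ℕ)} := subJ_mono hBV hb
      have hgV : a * b ∈ subJ s {i | 0 < (i : ℕ)} := subJ_mono hJV hgJ
      have haV : a ∈ subJ s {i | 0 < (i : ℕ)} := by
        have := mul_mem hgV (inv_mem hbV)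
        simpa [mul_inv_cancel_right] using this
      have ha' : a ∈ subJ s ({i | 0 < (i : ℕ)} ∩ {i ∈ (Set.univ : Set (Fin r)) | (i : ℕ) < (k : ℕ)}) := by
        rw [← lemB0 h1 hmid hAF]
        exact Subgroup.mem_inf.2 ⟨haV, ha⟩
      have hmem : a * b ∈ subJ s J ⊓ subJ s
          (({i | 0 < (i : ℕ)} ∩ {i ∈ (Set.univ : Set (Fin r)) | (i : ℕ) < (k : ℕ)}) ∪
            {i ∈ (Set.univ : Set (Fin r)) | (k : ℕ) < (i : ℕ)}) :=
        Subgroup.mem_inf.2 ⟨hgJ, mul_mem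
          (subJ_mono Set.subset_union_left ha') (subJ_mono Set.subset_union_right hb)⟩
      rw [h2 J hJV _ (Set.union_subset Set.inter_subset_left hBV)] at hmem
      refine subJ_mono ?_ hmem
      rintro i ⟨hiJ, hi⟩
      refine ⟨hiJ, ?_⟩
      simp only [Set.mem_singleton_iff, Fin.ext_iff]
      rcases hi with ⟨_, _, hlt⟩ | ⟨_, hgt⟩ <;> omega
    · exact le_inf (subJ_mono Set.diff_subset)
        (subJ_mono (fun i hi => by
          simp only [Set.mem_setOf_eq, ne_eq]
          intro he; exact hi.2 (by rw [he]; rfl)))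
  by_cases hF : I ⊆ {i | (i : ℕ) + 1 < r}
  · exact sub1 I hF
  by_cases hV : I ⊆ {i | 0 < (i : ℕ)}
  · exact sub2 I hV
  by_cases hU : I = Set.univ
  · subst hU
    rw [inf_eq_right.2 (subJ_mono (Set.subset_univ _))]
    refine subJ_congr ?_
    ext i
    simp only [Set.mem_setOf_eq, ne_eq, Set.mem_diff, Set.mem_univ, true_and,
      Set.mem_singleton_iff]
  obtain ⟨k', hk'⟩ := (Set.ne_univ_iff_exists_notMem I).1 hU
  have hkk' : (k : ℕ) ≠ (k' : ℕ) := fun h => hk' (by rwa [Fin.ext h] at hkI)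
  apply le_antisymm
  swap
  · exact le_inf (subJ_mono Set.diff_subset)
      (subJ_mono (fun i hi => by
        simp only [Set.mem_setOf_eq, ne_eq]
        intro he; exact hi.2 (by rw [he]; rfl)))
  intro g hg
  obtain ⟨hgI, hgW⟩ := Subgroup.mem_inf.1 hg
  have hgI' : g ∈ subJ s ({i ∈ I | (i : ℕ) < (k' : ℕ)} ∪ {i ∈ I | (k' : ℕ) < (i : ℕ)}) := by
    rw [← split_at k' I hk']; exact hgI
  obtain ⟨c, hc, d, hd, rfl⟩ := subJ_split (comm_split hcomm k' I) g hgI'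
  rcases lt_or_gt_of_ne hkk' with hlt | hgt
  · -- k < k' : D avoids k, strip k from C using sub1
    have hDW : {i ∈ I | (k' : ℕ) < (i : ℕ)} ⊆ {i : Fin r | i ≠ k} := by
      rintro i ⟨_, hi⟩
      simp only [Set.mem_setOf_eq, ne_eq, Fin.ext_iff]
      omega
    have hdW : d ∈ subJ s {i | i ≠ k} := subJ_mono hDW hd
    have hcW : c ∈ subJ s {i | i ≠ k} := by
      have := mul_mem hgW (inv_mem hdW)
      simpa [mul_inv_cancel_right] using this
    have hCF : {i ∈ I | (i : ℕ) < (k' : ℕ)} ⊆ {i : Fin r | (i : ℕ) + 1 < r} := by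
      rintro i ⟨_, hi⟩
      have := k'.isLt
      simp only [Set.mem_setOf_eq]; omega
    have hc' : c ∈ subJ s ({i ∈ I | (i : ℕ) < (k' : ℕ)} \ {k}) := by
      rw [← sub1 _ hCF]
      exact Subgroup.mem_inf.2 ⟨hc, hcW⟩
    refine mul_mem (subJ_mono ?_ hc') (subJ_mono ?_ hd)
    · rintro i ⟨⟨hiI, _⟩, hik⟩
      exact ⟨hiI, hik⟩
    · rintro i ⟨hiI, hi⟩
      refine ⟨hiI, ?_⟩
      simp only [Set.mem_singleton_iff, Fin.ext_iff]
      omega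
  · -- k' < k : C avoids k, strip k from D using sub2
    have hCW : {i ∈ I | (i : ℕ) < (k' : ℕ)} ⊆ {i : Fin r | i ≠ k} := by
      rintro i ⟨_, hi⟩
      simp only [Set.mem_setOf_eq, ne_eq, Fin.ext_iff]
      omega
    have hcW : c ∈ subJ s {i | i ≠ k} := subJ_mono hCW hc
    have hdW : d ∈ subJ s {i | i ≠ k} := by
      have := mul_mem (inv_mem hcW) hgW
      simpa [inv_mul_cancel_left] using this
    have hDV : {i ∈ I | (k' : ℕ) < (i : ℕ)} ⊆ {i : Fin r | 0 < (i : ℕ)} := by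
      rintro i ⟨_, hi⟩
      simp only [Set.mem_setOf_eq]; omega
    have hd' : d ∈ subJ s ({i ∈ I | (k' : ℕ) < (i : ℕ)} \ {k}) := by
      rw [← sub2 _ hDV]
      exact Subgroup.mem_inf.2 ⟨hd, hdW⟩
    refine mul_mem (subJ_mono ?_ hc) (subJ_mono ?_ hd')
    · rintro i ⟨hiI, hi⟩
      refine ⟨hiI, ?_⟩
      simp only [Set.mem_singleton_iff, Fin.ext_iff]
      omega
    · rintro i ⟨⟨hiI, _⟩, hik⟩
      exact ⟨hiI, hik⟩

include hcomm h1 h2 hmid in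
theorem lemFinal (I K : Set (Fin r)) :
    subJ s I ⊓ subJ s K = subJ s (I ∩ K) := by
  have hC := lemC hcomm h1 h2 hmid
  have base : ∀ I K : Set (Fin r), I ⊆ K → subJ s I ⊓ subJ s K = subJ s (I ∩ K) := by
    intro I K h
    rw [inf_eq_left.2 (subJ_mono h), Set.inter_eq_self_of_subset_left h]
  have main : ∀ (n : ℕ) (I K : Set (Fin r)), (I \ K).ncard ≤ n →
      subJ s I ⊓ subJ s K = subJ s (I ∩ K) := by
    intro n
    induction n with
    | zero =>
      intro I K h
      have : I \ K = ∅ := (Set.ncard_eq_zero (Set.toFinite _)).1 (Nat.le_zero.1 h)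
      exact base I K (Set.diff_eq_empty.1 this)
    | succ n ih =>
      intro I K h
      by_cases hIK : I ⊆ K
      · exact base I K hIK
      obtain ⟨k, hkI, hkK⟩ := Set.not_subset.1 hIK
      have hKW : subJ s K ≤ subJ s {i | i ≠ k} :=
        subJ_mono (fun i hi => ne_of_mem_of_not_mem hi hkK)
      have hcard : ((I \ {k}) \ K).ncard ≤ n := by
        have he : (I \ {k}) \ K = (I \ K) \ {k} := by
          ext i; simp only [Set.mem_diff, Set.mem_singleton_iff]; tauto
        have hlt : ((I \ K) \ {k}).ncard < (I \ K).ncard :=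
          Set.ncard_diff_singleton_lt_of_mem ⟨hkI, hkK⟩ (Set.toFinite _)
        rw [he]; omega
      calc subJ s I ⊓ subJ s K
          = subJ s I ⊓ (subJ s {i | i ≠ k} ⊓ subJ s K) := by rw [inf_eq_right.2 hKW]
        _ = (subJ s I ⊓ subJ s {i | i ≠ k}) ⊓ subJ s K := (inf_assoc _ _ _).symm
        _ = subJ s (I \ {k}) ⊓ subJ s K := by rw [hC k I]
        _ = subJ s ((I \ {k}) ∩ K) := ih _ _ hcard
        _ = subJ s (I ∩ K) := subJ_congr (by
            ext i
            simp only [Set.mem_inter_iff, Set.mem_diff, Set.mem_singleton_iff]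
            constructor
            · rintro ⟨⟨hi, _⟩, hik⟩; exact ⟨hi, hik⟩
            · rintro ⟨hi, hik⟩
              exact ⟨⟨hi, fun he => hkK (he ▸ hik)⟩, hik⟩)
  exact main _ I K le_rfl

end Main

end StringCAux

/-- If `(G, {s₁,…,s_r})` is a string group generated by involutions such that
`G_{1,…,r-1}` and `G_{2,…,r}` are string C-groups, `s_r ∉ G_{1,…,r-1}` and `G_{2,…,r-1}`
is a maximal subgroup of `G_{2,…,r}`, then `(G, {s₁,…,s_r})` is a string C-group. -/
theorem stmt8 {G : Type*} [Group G] {r : ℕ} (hr : 1 ≤ r) (s : Fin r → G)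
    (hinv : ∀ i, orderOf (s i) = 2)
    (hgen : Subgroup.closure (Set.range s) = ⊤)
    (hcomm : ∀ i j : Fin r, (i : ℕ) + 2 ≤ (j : ℕ) ∨ (j : ℕ) + 2 ≤ (i : ℕ) →
      Commute (s i) (s j))
    (h1 : IsCOn s {i | (i : ℕ) + 1 < r})
    (h2 : IsCOn s {i | 0 < (i : ℕ)})
    (hlast : s ⟨r - 1, by omega⟩ ∉ subJ s {i | (i : ℕ) + 1 < r})
    (hmax : subJ s ({i | (i : ℕ) + 1 < r} ∩ {i | 0 < (i : ℕ)}) < subJ s {i | 0 < (i : ℕ)} ∧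
      ∀ K : Subgroup G, subJ s ({i | (i : ℕ) + 1 < r} ∩ {i | 0 < (i : ℕ)}) < K →
        K ≤ subJ s {i | 0 < (i : ℕ)} → K = subJ s {i | 0 < (i : ℕ)}) :
    IsCOn s Set.univ := by
  classical
  have hmid : subJ s {i | (i : ℕ) + 1 < r} ⊓ subJ s {i | 0 < (i : ℕ)}
      = subJ s ({i | (i : ℕ) + 1 < r} ∩ {i | 0 < (i : ℕ)}) := by
    by_cases hr2 : 2 ≤ r
    · have hle : subJ s ({i | (i : ℕ) + 1 < r} ∩ {i | 0 < (i : ℕ)}) ≤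
          subJ s {i | (i : ℕ) + 1 < r} ⊓ subJ s {i | 0 < (i : ℕ)} :=
        le_inf (StringCAux.subJ_mono Set.inter_subset_left)
          (StringCAux.subJ_mono Set.inter_subset_right)
      rcases hle.lt_or_eq with hlt | heq
      · exfalso
        have heq2 := hmax.2 _ hlt inf_le_right
        have hVF : subJ s {i | 0 < (i : ℕ)} ≤ subJ s {i | (i : ℕ) + 1 < r} := by
          rw [← heq2]; exact inf_le_left
        apply hlast
        apply hVF
        apply Subgroup.subset_closure
        exact ⟨⟨r - 1, by omega⟩, by simp only [Set.mem_setOf_eq]; omega, rfl⟩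
      · exact heq.symm
    · have hr1 : r = 1 := by omega
      subst hr1
      have hV : {i : Fin 1 | 0 < (i : ℕ)} = ∅ := by
        ext i
        have := i.isLt
        simp only [Set.mem_setOf_eq, Set.mem_empty_iff_false, iff_false]
        omega
      rw [hV, Set.inter_empty]
      have : subJ s (∅ : Set (Fin 1)) = ⊥ := by
        simp [subJ]
      rw [this, inf_bot_eq]
  intro J _ K _
  exact StringCAux.lemFinal hcomm h1 h2 hmid J K
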